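/- Let P be a partially ordered set regarded as a category (with a unique morphism p → q iff p ≤ q), and suppose P carries a left-invariant group structure. Then the category of functors from P to the category of ℤ-modules is equivalent to the category of P-graded modules over the monoid ring ℤ[P₊], where P₊ = {p : 1 ≤ p}, with the equivalence sending a functor F to the product ∏_{p ∈ P} F(p) with the action of a positive element ρ : 1 → q given componentwise by the maps F(p ≤ pq). -/

import Mathlib

open CategoryTheory

universe u

variable (G : Type) [Group G] [PartialOrder G] [CovariantClass G G (· * ·) (· ≤ ·)]

/-- The category of `P`-graded `ℤ[P₊]`-modules, for a partially ordered group `P`: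
an object is a family of `ℤ`-modules `(M_p)_{p ∈ P}` (the graded pieces of
`M = ∏_p 1_p M`) together with, for each positive element `1 ≤ q` of the cone `P₊`, maps
`M_p → M_{pq}` (the action of the degree-`q` part of the monoid ring `ℤ[P₊]`), compatibly
with the monoid structure of `P₊`. -/
structure PogGradedModule where
  piece : G → ModuleCat.{0} ℤ
  act : ∀ p q : G, 1 ≤ q → (piece p ⟶ piece (p * q))
  act_one : ∀ p, act p 1 le_rfl = eqToHom (by rw [mul_one])
  act_mul : ∀ (p q₁ q₂ : G) (h₁ : 1 ≤ q₁) (h₂ : 1 ≤ q₂) (h₁₂ : 1 ≤ q₁ * q₂),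
    act p (q₁ * q₂) h₁₂ = act p q₁ h₁ ≫ act (p * q₁) q₂ h₂ ≫ eqToHom (by rw [mul_assoc])

namespace PogGradedModule

variable {G}

/-- Morphisms of graded modules: degree-preserving families of `ℤ`-linear maps commuting
with the `ℤ[P₊]`-action. -/
@[ext]
structure Hom (M N : PogGradedModule G) where
  app : ∀ p, M.piece p ⟶ N.piece p
  comm : ∀ (p q : G) (h : 1 ≤ q), M.act p q h ≫ app (p * q) = app p ≫ N.act p q h

instance : Category (PogGradedModule G) where
  Hom := Hom
  id M := ⟨fun p => 𝟙 _, by intro p q h; simp⟩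
  comp f g := ⟨fun p => f.app p ≫ g.app p, by
    intro p q h
    rw [← Category.assoc, f.comm, Category.assoc, g.comm, ← Category.assoc]⟩

end PogGradedModule


namespace PogGradedModule

variable {G}

lemma act_eq (M : PogGradedModule G) {p p' q q' : G} (hp : p = p') (hq : q = q')
    (h : 1 ≤ q) :
    M.act p q h = eqToHom (by rw [hp]) ≫ M.act p' q' (hq ▸ h) ≫
      eqToHom (by rw [hp, hq]) := by
  subst hp; subst hq; simp

lemma hom_app_eqToHom {M N : PogGradedModule G} (f : Hom M N) {a b : G} (e : a = b) :
    f.app a ≫ eqToHom (by rw [e]) = eqToHom (by rw [e]) ≫ f.app b := by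
  subst e; simp

@[simp] lemma id_app (M : PogGradedModule G) (p : G) :
    (Hom.app (𝟙 M)) p = 𝟙 (M.piece p) := rfl

@[simp] lemma comp_app {M N K : PogGradedModule G} (f : M ⟶ N) (g : N ⟶ K) (p : G) :
    (Hom.app (f ≫ g)) p = f.app p ≫ g.app p := rfl

end PogGradedModule

variable {G}

private lemma pos_of_le {p q : G} (h : p ≤ q) : (1 : G) ≤ p⁻¹ * q := by
  have := mul_le_mul_right h p⁻¹
  rwa [inv_mul_cancel] at this

/-- The functor sending `F : G ⥤ Mod ℤ` to its associated graded module. -/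
def toGraded : (G ⥤ ModuleCat.{0} ℤ) ⥤ PogGradedModule G where
  obj F :=
    { piece := F.obj
      act := fun p q h => F.map (homOfLE (by simpa using mul_le_mul_right h p))
      act_one := fun p => by
        have : (homOfLE (by simpa using mul_le_mul_right le_rfl p) : p ⟶ p * 1) =
            eqToHom (by rw [mul_one]) := Subsingleton.elim _ _
        rw [this, eqToHom_map]
      act_mul := fun p q₁ q₂ h₁ h₂ h₁₂ => by
        have he : (eqToHom (by rw [mul_assoc]) :
            F.obj (p * q₁ * q₂) ⟶ F.obj (p * (q₁ * q₂))) =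
            F.map (eqToHom (by rw [mul_assoc])) := by rw [eqToHom_map]
        rw [he, ← F.map_comp, ← F.map_comp]
        exact congrArg F.map (Subsingleton.elim _ _) }
  map {F F'} α :=
    { app := fun p => α.app p
      comm := fun p q h => (α.naturality _) }

set_option maxHeartbeats 1000000 in
private lemma map_comp_aux (M : PogGradedModule G) {p q r : G} (f : p ⟶ q) (g : q ⟶ r) :
    M.act p (p⁻¹ * r) (pos_of_le (f ≫ g).le) ≫
        (eqToHom (by rw [mul_inv_cancel_left]) : M.piece (p * (p⁻¹ * r)) ⟶ M.piece r) =
      (M.act p (p⁻¹ * q) (pos_of_le f.le) ≫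
          (eqToHom (by rw [mul_inv_cancel_left]) : M.piece (p * (p⁻¹ * q)) ⟶ M.piece q)) ≫
        (M.act q (q⁻¹ * r) (pos_of_le g.le) ≫
          (eqToHom (by rw [mul_inv_cancel_left]) : M.piece (q * (q⁻¹ * r)) ⟶ M.piece r)) := by
  rw [M.act_eq (p := p) rfl (show p⁻¹ * r = (p⁻¹ * q) * (q⁻¹ * r) by group),
    M.act_mul p (p⁻¹ * q) (q⁻¹ * r) (pos_of_le f.le) (pos_of_le g.le),
    M.act_eq (show p * (p⁻¹ * q) = q by rw [mul_inv_cancel_left]) (rfl (a := q⁻¹ * r))]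
  simp only [Category.assoc, eqToHom_trans, eqToHom_refl, Category.comp_id,
    Category.id_comp, eqToHom_trans_assoc]

set_option maxHeartbeats 1000000 in
private lemma map_id_aux (M : PogGradedModule G) (p : G) :
    M.act p (p⁻¹ * p) (pos_of_le (𝟙 p).le) ≫
        (eqToHom (by rw [mul_inv_cancel_left]) : M.piece (p * (p⁻¹ * p)) ⟶ M.piece p) =
      𝟙 (M.piece p) := by
  rw [M.act_eq (p := p) rfl (show p⁻¹ * p = 1 by rw [inv_mul_cancel])]
  simp [M.act_one]

set_option maxHeartbeats 1000000 in
private lemma nat_aux {M N : PogGradedModule G} (f : M ⟶ N) {p q : G} (g : p ⟶ q) :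
    (M.act p (p⁻¹ * q) (pos_of_le g.le) ≫
        (eqToHom (by rw [mul_inv_cancel_left]) : M.piece (p * (p⁻¹ * q)) ⟶ M.piece q)) ≫
      f.app q =
    f.app p ≫ (N.act p (p⁻¹ * q) (pos_of_le g.le) ≫
        (eqToHom (by rw [mul_inv_cancel_left]) : N.piece (p * (p⁻¹ * q)) ⟶ N.piece q)) := by
  rw [Category.assoc,
    ← PogGradedModule.hom_app_eqToHom f (show p * (p⁻¹ * q) = q by rw [mul_inv_cancel_left]),
    ← Category.assoc, f.comm, Category.assoc]

/-- The inverse functor. -/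
def ofGraded : PogGradedModule G ⥤ (G ⥤ ModuleCat.{0} ℤ) where
  obj M :=
    { obj := M.piece
      map := fun {p q} f =>
        M.act p (p⁻¹ * q) (pos_of_le f.le) ≫ eqToHom (by rw [mul_inv_cancel_left])
      map_id := fun p => map_id_aux M p
      map_comp := fun {p q r} f g => map_comp_aux M f g }
  map {M N} f :=
    { app := fun p => f.app p
      naturality := fun p q g => nat_aux f g }

set_option maxHeartbeats 1000000 in
lemma unit_nat (F : G ⥤ ModuleCat.{0} ℤ) {p q : G} (f : p ⟶ q) :
    F.map f ≫ 𝟙 ((((toGraded ⋙ ofGraded).obj F)).obj q) =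
      𝟙 (F.obj p) ≫ ((toGraded ⋙ ofGraded).obj F).map f := by
  dsimp only [Functor.comp_obj, toGraded, ofGraded]
  rw [Category.comp_id, Category.id_comp]
  show F.map f = F.map _ ≫ eqToHom _
  rw [show (eqToHom (by rw [mul_inv_cancel_left]) :
      F.obj (p * (p⁻¹ * q)) ⟶ F.obj q) = F.map (eqToHom (by rw [mul_inv_cancel_left])) by
    rw [eqToHom_map], ← F.map_comp]
  exact congrArg F.map (Subsingleton.elim _ _)

set_option maxHeartbeats 1000000 in
private lemma counit_comm (M : PogGradedModule G) (p q : G) (h : 1 ≤ q) :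
    ((toGraded.obj (ofGraded.obj M)).act p q h ≫ 𝟙 (M.piece (p * q))) =
      𝟙 (M.piece p) ≫ M.act p q h := by
  dsimp only [toGraded, ofGraded]
  rw [Category.comp_id, Category.id_comp]
  show M.act p (p⁻¹ * (p * q)) _ ≫ eqToHom _ = M.act p q h
  rw [M.act_eq (p := p) rfl (show p⁻¹ * (p * q) = q by rw [inv_mul_cancel_left])]
  simp

set_option maxHeartbeats 1000000 in
/-- The equivalence. -/
def gradedEquiv : (G ⥤ ModuleCat.{0} ℤ) ≌ PogGradedModule G :=
  CategoryTheory.Equivalence.mk toGraded ofGraded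
    (NatIso.ofComponents
      (fun F => NatIso.ofComponents (fun p => Iso.refl _) (fun f => unit_nat F f))
      (fun {F F'} α => by
        apply NatTrans.ext
        funext p
        simp [toGraded, ofGraded]))
    (NatIso.ofComponents
      (fun M =>
        { hom := ⟨fun p => 𝟙 _, fun p q h => counit_comm M p q h⟩
          inv := ⟨fun p => 𝟙 _, fun p q h => (counit_comm M p q h).symm⟩
          hom_inv_id := by apply PogGradedModule.Hom.ext; funext p; simp; exact Category.comp_id _
          inv_hom_id := by apply PogGradedModule.Hom.ext; funext p; simp; exact Category.comp_id _ })
      (fun {M N} f => by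
        apply PogGradedModule.Hom.ext
        funext p
        simp [toGraded, ofGraded]))

/-- for a partially ordered group `P` regarded as a category, the category of
functors `P ⥤ ℤ-Mod` is equivalent to the category of `P`-graded `ℤ[P₊]`-modules; the
equivalence sends a functor `F` to the graded module with pieces `F(p)` (i.e. to
`∏_p F(p)`), the action of a positive element `ρ : 1 → q` being given componentwise by
`F(p ≤ pq)`. -/
theorem functors_equiv_graded_modules :
    ∃ (e : (G ⥤ ModuleCat.{0} ℤ) ≌ PogGradedModule G)
      (hp : ∀ (F : G ⥤ ModuleCat.{0} ℤ) (p : G), (e.functor.obj F).piece p = F.obj p),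
      ∀ (F : G ⥤ ModuleCat.{0} ℤ) (p q : G) (h : 1 ≤ q),
        (e.functor.obj F).act p q h =
          eqToHom (hp F p) ≫
            F.map (homOfLE (by simpa using mul_le_mul_right h p)) ≫
              eqToHom (hp F (p * q)).symm := by
  refine ⟨gradedEquiv, fun F p => rfl, fun F p q h => ?_⟩
  show _ = 𝟙 _ ≫ _ ≫ 𝟙 _
  simp only [eqToHom_refl, Category.comp_id, Category.id_comp]
  rfl
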